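/- arXiv:1111.0851 — 2 statements merged into one kernel-verified Lean document; each statement's English description precedes it below -/
import Mathlib

section
/- Let ω : Ω → ℝ be a C² function on a domain Ω ⊂ ℝ² satisfying Δω = 2 sinh(2ω), and suppose |ω(w)| ≤ K₀/cosh(d(w)) whenever d(w) > 1, where d(w) is the Euclidean distance from w to ∂Ω. Then there exists a constant δ > 0 (depending only on K₀ and the constant in the interior gradient estimate for the Poisson equation) such that |∇ω(w₀)| < δ e^{-d(w₀)} for every w₀ ∈ Ω with d(w₀) > 2. -/
open Metric

/-- The Euclidean Laplacian of a function `ω : ℂ → ℝ` (identifying `ℝ² ≅ ℂ`). -/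
noncomputable def euclideanLap (ω : ℂ → ℝ) (z : ℂ) : ℝ :=
  fderiv ℝ (fun w => fderiv ℝ ω w 1) z 1 +
    fderiv ℝ (fun w => fderiv ℝ ω w Complex.I) z Complex.I

namespace GradDecay

open intervalIntegral Real

noncomputable def cir (θ : ℝ) : ℂ := Complex.exp (θ * Complex.I)
noncomputable def wk (θ : ℝ) : ℂ := Complex.exp (-(θ * Complex.I))

lemma continuous_cir : Continuous cir := Complex.continuous_exp.comp (by continuity)
lemma continuous_wk : Continuous wk := Complex.continuous_exp.comp (by continuity)

lemma norm_cir (θ : ℝ) : ‖cir θ‖ = 1 := by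
  simp [cir, Complex.norm_exp]
lemma norm_wk (θ : ℝ) : ‖wk θ‖ = 1 := by
  simp [wk, Complex.norm_exp]
lemma cir_zero : cir 0 = 1 := by simp [cir]
lemma cir_two_pi : cir (2 * π) = 1 := by
  have : ((2 * π : ℝ) : ℂ) * Complex.I = 2 * π * Complex.I := by push_cast; ring
  rw [cir, this, Complex.exp_two_pi_mul_I]
lemma wk_zero : wk 0 = 1 := by simp [wk]
lemma wk_two_pi : wk (2 * π) = 1 := by
  have : -(((2 * π : ℝ) : ℂ) * Complex.I) = -(2 * π * Complex.I) := by push_cast; ring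
  rw [wk, this, Complex.exp_neg, Complex.exp_two_pi_mul_I, inv_one]

lemma hasDerivAt_cir (θ : ℝ) : HasDerivAt cir (cir θ * Complex.I) θ := by
  have h1 : HasDerivAt (fun θ : ℝ => (θ : ℂ) * Complex.I) Complex.I θ := by
    simpa using (Complex.ofRealCLM.hasDerivAt (x := θ)).mul_const Complex.I
  exact h1.cexp

lemma hasDerivAt_wk (θ : ℝ) : HasDerivAt wk (wk θ * -Complex.I) θ := by
  have h1 : HasDerivAt (fun θ : ℝ => -((θ : ℂ) * Complex.I)) (-Complex.I) θ := by
    have h := (((hasDerivAt_id θ).ofReal_comp).mul_const Complex.I).neg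
    rw [Complex.ofReal_one, one_mul] at h
    exact h
  exact h1.cexp

lemma hasDerivAt_param_integral {G G' : ℝ → ℝ → ℂ}
    (hG : Continuous fun q : ℝ × ℝ => G q.1 q.2)
    (hG' : Continuous fun q : ℝ × ℝ => G' q.1 q.2)
    (hd : ∀ ρ θ, HasDerivAt (fun r => G r θ) (G' ρ θ) ρ) (ρ₀ : ℝ) :
    HasDerivAt (fun ρ => ∫ θ in (0:ℝ)..(2 * π), G ρ θ)
      (∫ θ in (0:ℝ)..(2 * π), G' ρ₀ θ) ρ₀ := by
  have hK : IsCompact ((Set.Icc (ρ₀ - 1) (ρ₀ + 1)) ×ˢ (Set.Icc (0:ℝ) (2 * π))) :=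
    isCompact_Icc.prod isCompact_Icc
  obtain ⟨C, hC⟩ := hK.exists_bound_of_continuousOn hG'.continuousOn
  have key := intervalIntegral.hasDerivAt_integral_of_dominated_loc_of_deriv_le
    (F := G) (F' := G') (x₀ := ρ₀) (a := 0) (b := 2 * π)
    (bound := fun _ => C) (μ := MeasureTheory.volume) (ball_mem_nhds ρ₀ one_pos)
    (Filter.Eventually.of_forall fun x =>
      ((hG.comp (Continuous.prodMk_right x)).aestronglyMeasurable))
    ((hG.comp (Continuous.prodMk_right ρ₀)).intervalIntegrable 0 (2 * π))
    ((hG'.comp (Continuous.prodMk_right ρ₀)).aestronglyMeasurable)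
    ?_ (intervalIntegrable_const) ?_
  · exact key.2
  · refine Filter.Eventually.of_forall fun t ht x hx => ?_
    refine hC (x, t) ⟨?_, ?_⟩
    · have := mem_ball_iff_norm.mp hx
      constructor <;> [linarith [abs_le.mp (le_of_lt (by simpa using this))] ;
        linarith [abs_le.mp (le_of_lt (by simpa using this))]]
    · rw [Set.uIoc_of_le (by positivity : (0:ℝ) ≤ 2 * π)] at ht
      exact ⟨le_of_lt ht.1, ht.2⟩
  · exact Filter.Eventually.of_forall fun t _ x _ => hd x t

noncomputable def pmap (x₀ : ℂ) (ρ θ : ℝ) : ℂ := x₀ + (ρ : ℂ) * cir θ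

lemma continuous_pmap (x₀ : ℂ) : Continuous fun q : ℝ × ℝ => pmap x₀ q.1 q.2 := by
  unfold pmap
  exact continuous_const.add ((Complex.continuous_ofReal.comp continuous_fst).mul
    (continuous_cir.comp continuous_snd))

lemma hasDerivAt_pmap_rho (x₀ : ℂ) (θ ρ : ℝ) :
    HasDerivAt (fun r : ℝ => pmap x₀ r θ) (cir θ) ρ := by
  have h := (Complex.ofRealCLM.hasDerivAt (x := ρ)).mul_const (cir θ)
  simpa [pmap] using h.const_add x₀

lemma pmap_mem_closedBall (x₀ : ℂ) {ρ R : ℝ} (h0 : 0 ≤ ρ) (hρ : ρ ≤ R) (θ : ℝ) :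
    pmap x₀ ρ θ ∈ closedBall x₀ R := by
  rw [mem_closedBall, dist_eq_norm, pmap]
  simp only [add_sub_cancel_left]
  rw [norm_mul, norm_cir, mul_one, Complex.norm_real, Real.norm_eq_abs, abs_of_nonneg h0]
  exact hρ


lemma hasDerivAt_pmap_theta (x₀ : ℂ) (ρ θ : ℝ) :
    HasDerivAt (fun t : ℝ => pmap x₀ ρ t) ((ρ:ℂ) * (cir θ * Complex.I)) θ := by
  simpa [pmap] using ((hasDerivAt_cir θ).const_mul ((ρ:ℂ))).const_add x₀

lemma rot_identity (H : ℂ →L[ℝ] ℂ →L[ℝ] ℝ) (θ : ℝ) :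
    (H (cir θ)) (cir θ) + (H (cir θ * Complex.I)) (cir θ * Complex.I)
      = (H 1) 1 + (H Complex.I) Complex.I := by
  have hc : cir θ = (Real.cos θ) • (1:ℂ) + (Real.sin θ) • Complex.I := by
    rw [cir, Complex.exp_mul_I]
    simp [Complex.real_smul]
  have hci : cir θ * Complex.I = (-(Real.sin θ)) • (1:ℂ) + (Real.cos θ) • Complex.I := by
    rw [cir, Complex.exp_mul_I]
    simp [Complex.real_smul]
    ring_nf
    simp [Complex.I_sq]
    ring
  rw [hci, hc]
  simp only [map_add, map_smul, ContinuousLinearMap.add_apply,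
    ContinuousLinearMap.coe_smul', Pi.smul_apply, smul_eq_mul]
  linear_combination (Real.sin_sq_add_cos_sq θ) * ((H 1) 1 + (H Complex.I) Complex.I)

lemma cir_eq (θ : ℝ) : cir θ = (Real.cos θ) • (1:ℂ) + (Real.sin θ) • Complex.I := by
  rw [cir, Complex.exp_mul_I]
  simp [Complex.real_smul]

lemma wk_eq (θ : ℝ) : wk θ = ((Real.cos θ : ℝ) : ℂ) - ((Real.sin θ : ℝ) : ℂ) * Complex.I := by
  have h : -((θ:ℂ) * Complex.I) = ((-θ : ℝ) : ℂ) * Complex.I := by push_cast; ring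
  rw [wk, h, Complex.exp_mul_I]
  push_cast
  rw [Complex.cos_neg, Complex.sin_neg]
  ring

section
variable (u : ℂ → ℝ) (x₀ : ℂ)

noncomputable def gfun (ρ : ℝ) : ℂ :=
  ∫ θ in (0:ℝ)..(2 * π), (u (pmap x₀ ρ θ) : ℂ) * wk θ

noncomputable def g1 (ρ : ℝ) : ℂ :=
  ∫ θ in (0:ℝ)..(2 * π), (fderiv ℝ u (pmap x₀ ρ θ) (cir θ) : ℂ) * wk θ

noncomputable def g2 (ρ : ℝ) : ℂ :=
  ∫ θ in (0:ℝ)..(2 * π), ((fderiv ℝ (fderiv ℝ u) (pmap x₀ ρ θ) (cir θ)) (cir θ) : ℂ) * wk θ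

noncomputable def f1 (ρ : ℝ) : ℂ :=
  ∫ θ in (0:ℝ)..(2 * π), (euclideanLap u (pmap x₀ ρ θ) : ℂ) * wk θ

variable (hu : ContDiff ℝ 2 u)
include hu

lemma continuous_Du : Continuous (fderiv ℝ u) := hu.continuous_fderiv (by simp)

lemma continuous_D2 : Continuous (fderiv ℝ (fderiv ℝ u)) :=
  (hu.fderiv_right (m := 1) (by norm_num)).continuous_fderiv (by simp)

lemma fderiv_apply_const (v : ℂ) (z : ℂ) :
    fderiv ℝ (fun w => fderiv ℝ u w v) z = (fderiv ℝ (fderiv ℝ u) z).flip v := by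
  have hD : HasFDerivAt (fderiv ℝ u) (fderiv ℝ (fderiv ℝ u) z) z :=
    (((hu.fderiv_right (m := 1) (by norm_num)).differentiable (by simp)) _).hasFDerivAt
  have h3 := (hD.clm_apply (hasFDerivAt_const v z)).fderiv
  simp only [ContinuousLinearMap.comp_zero, zero_add] at h3
  exact h3

lemma lap_eq (z : ℂ) : euclideanLap u z =
    (fderiv ℝ (fderiv ℝ u) z 1) 1 + (fderiv ℝ (fderiv ℝ u) z Complex.I) Complex.I := by
  simp only [euclideanLap, fderiv_apply_const u hu]
  simp [ContinuousLinearMap.flip_apply]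

lemma continuous_lap : Continuous (euclideanLap u) := by
  have h1 : euclideanLap u = fun z =>
      (fderiv ℝ (fderiv ℝ u) z 1) 1 + (fderiv ℝ (fderiv ℝ u) z Complex.I) Complex.I :=
    funext (lap_eq u hu)
  rw [h1]
  have hc := continuous_D2 u hu
  exact ((hc.clm_apply continuous_const).clm_apply continuous_const).add
    ((hc.clm_apply continuous_const).clm_apply continuous_const)

lemma continuous_G0 : Continuous fun q : ℝ × ℝ => (u (pmap x₀ q.1 q.2) : ℂ) * wk q.2 :=
  (Complex.continuous_ofReal.comp (hu.continuous.comp (continuous_pmap x₀))).mul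
    (continuous_wk.comp continuous_snd)

lemma continuous_G1 : Continuous fun q : ℝ × ℝ =>
    (fderiv ℝ u (pmap x₀ q.1 q.2) (cir q.2) : ℂ) * wk q.2 := by
  refine (Complex.continuous_ofReal.comp ?_).mul (continuous_wk.comp continuous_snd)
  exact ((continuous_Du u hu).comp (continuous_pmap x₀)).clm_apply
    (continuous_cir.comp continuous_snd)

lemma continuous_G2 : Continuous fun q : ℝ × ℝ =>
    ((fderiv ℝ (fderiv ℝ u) (pmap x₀ q.1 q.2) (cir q.2)) (cir q.2) : ℂ) * wk q.2 := by
  refine (Complex.continuous_ofReal.comp ?_).mul (continuous_wk.comp continuous_snd)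
  exact (((continuous_D2 u hu).comp (continuous_pmap x₀)).clm_apply
    (continuous_cir.comp continuous_snd)).clm_apply (continuous_cir.comp continuous_snd)

lemma continuous_Gf : Continuous fun q : ℝ × ℝ =>
    (euclideanLap u (pmap x₀ q.1 q.2) : ℂ) * wk q.2 :=
  (Complex.continuous_ofReal.comp ((continuous_lap u hu).comp (continuous_pmap x₀))).mul
    (continuous_wk.comp continuous_snd)

lemma hasDerivAt_u_comp (θ ρ : ℝ) :
    HasDerivAt (fun r : ℝ => u (pmap x₀ r θ))
      (fderiv ℝ u (pmap x₀ ρ θ) (cir θ)) ρ := by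
  have h1 : HasFDerivAt u (fderiv ℝ u (pmap x₀ ρ θ)) (pmap x₀ ρ θ) :=
    (hu.differentiable (by simp) _).hasFDerivAt
  exact h1.comp_hasDerivAt ρ (hasDerivAt_pmap_rho x₀ θ ρ)

lemma hasDerivAt_Du_comp (v : ℂ) (θ ρ : ℝ) :
    HasDerivAt (fun r : ℝ => fderiv ℝ u (pmap x₀ r θ) v)
      ((fderiv ℝ (fderiv ℝ u) (pmap x₀ ρ θ) (cir θ)) v) ρ := by
  have h1 : HasFDerivAt (fderiv ℝ u) (fderiv ℝ (fderiv ℝ u) (pmap x₀ ρ θ)) (pmap x₀ ρ θ) :=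
    (((hu.fderiv_right (m := 1) (by norm_num)).differentiable (by simp)) _).hasFDerivAt
  have h2 := h1.comp_hasDerivAt ρ (hasDerivAt_pmap_rho x₀ θ ρ)
  simpa using h2.clm_apply (hasDerivAt_const ρ v)

lemma hasDerivAt_gfun (ρ : ℝ) : HasDerivAt (gfun u x₀) (g1 u x₀ ρ) ρ := by
  exact hasDerivAt_param_integral (continuous_G0 u x₀ hu) (continuous_G1 u x₀ hu)
    (fun ρ θ => ((hasDerivAt_u_comp u x₀ hu θ ρ).ofReal_comp).mul_const (wk θ)) ρ

lemma hasDerivAt_g1 (ρ : ℝ) : HasDerivAt (g1 u x₀) (g2 u x₀ ρ) ρ := by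
  exact hasDerivAt_param_integral (continuous_G1 u x₀ hu) (continuous_G2 u x₀ hu)
    (fun ρ θ => ((hasDerivAt_Du_comp u x₀ hu (cir θ) θ ρ).ofReal_comp).mul_const (wk θ)) ρ

lemma ibp (ρ : ℝ) :
    (∫ θ in (0:ℝ)..(2 * π),
      ((fderiv ℝ (fderiv ℝ u) (pmap x₀ ρ θ) ((ρ:ℂ) * (cir θ * Complex.I))
          ((ρ:ℂ) * (cir θ * Complex.I))
        + fderiv ℝ u (pmap x₀ ρ θ) (-((ρ:ℂ) * cir θ)) : ℝ) : ℂ) * wk θ)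
      = - gfun u x₀ ρ := by
  set Φ : ℝ → ℂ := fun θ =>
    (fderiv ℝ u (pmap x₀ ρ θ) ((ρ:ℂ) * (cir θ * Complex.I)) : ℂ) * wk θ
      + (u (pmap x₀ ρ θ) : ℂ) * (Complex.I * wk θ) with hPhi
  have hderiv : ∀ θ : ℝ, HasDerivAt Φ
      (((fderiv ℝ (fderiv ℝ u) (pmap x₀ ρ θ) ((ρ:ℂ) * (cir θ * Complex.I))
            ((ρ:ℂ) * (cir θ * Complex.I))
          + fderiv ℝ u (pmap x₀ ρ θ) (-((ρ:ℂ) * cir θ)) : ℝ) : ℂ) * wk θ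
        + (u (pmap x₀ ρ θ) : ℂ) * wk θ) θ := by
    intro θ
    have hp := hasDerivAt_pmap_theta x₀ ρ θ
    have hv : HasDerivAt (fun t : ℝ => (ρ:ℂ) * (cir t * Complex.I))
        ((ρ:ℂ) * ((cir θ * Complex.I) * Complex.I)) θ :=
      ((hasDerivAt_cir θ).mul_const Complex.I).const_mul ((ρ:ℂ))
    have hF : HasDerivAt (fun t => u (pmap x₀ ρ t))
        (fderiv ℝ u (pmap x₀ ρ θ) ((ρ:ℂ) * (cir θ * Complex.I))) θ :=
      ((hu.differentiable (by simp) _).hasFDerivAt).comp_hasDerivAt θ hp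
    have hN : HasDerivAt (fun t => fderiv ℝ u (pmap x₀ ρ t))
        (fderiv ℝ (fderiv ℝ u) (pmap x₀ ρ θ) ((ρ:ℂ) * (cir θ * Complex.I))) θ :=
      ((((hu.fderiv_right (m := 1) (by norm_num)).differentiable (by simp)) _).hasFDerivAt).comp_hasDerivAt
        θ hp
    have hFθ := hN.clm_apply hv
    have t1 := (hFθ.ofReal_comp).mul (hasDerivAt_wk θ)
    have t2 := (hF.ofReal_comp).mul ((hasDerivAt_wk θ).const_mul Complex.I)
    have hsum := t1.add t2
    have harg : (ρ:ℂ) * ((cir θ * Complex.I) * Complex.I) = -((ρ:ℂ) * cir θ) := by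
      rw [mul_assoc, Complex.I_mul_I, mul_neg_one, mul_neg]
    rw [harg] at hsum
    refine hsum.congr_deriv ?_
    push_cast
    ring_nf
    simp only [Complex.I_sq]
    ring
  have c_p : Continuous fun θ : ℝ => pmap x₀ ρ θ := by
    unfold pmap
    exact continuous_const.add (continuous_const.mul continuous_cir)
  have c_v : Continuous fun θ : ℝ => (ρ:ℂ) * (cir θ * Complex.I) :=
    continuous_const.mul (continuous_cir.mul continuous_const)
  have hcont1 : Continuous fun θ : ℝ =>
      (((fderiv ℝ (fderiv ℝ u) (pmap x₀ ρ θ) ((ρ:ℂ) * (cir θ * Complex.I))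
          ((ρ:ℂ) * (cir θ * Complex.I))
        + fderiv ℝ u (pmap x₀ ρ θ) (-((ρ:ℂ) * cir θ)) : ℝ) : ℂ)) * wk θ := by
    refine (Complex.continuous_ofReal.comp (Continuous.add ?_ ?_)).mul continuous_wk
    · exact (((continuous_D2 u hu).comp c_p).clm_apply c_v).clm_apply c_v
    · exact ((continuous_Du u hu).comp c_p).clm_apply
        (continuous_const.mul continuous_cir).neg
  have hcont2 : Continuous fun θ : ℝ => (u (pmap x₀ ρ θ) : ℂ) * wk θ :=
    (Complex.continuous_ofReal.comp (hu.continuous.comp c_p)).mul continuous_wk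
  have hint := intervalIntegral.integral_eq_sub_of_hasDerivAt
    (f := Φ) (a := (0:ℝ)) (b := 2 * π) (fun θ _ => hderiv θ)
    ((hcont1.add hcont2).intervalIntegrable 0 (2 * π))
  have hper : Φ (2 * π) = Φ 0 := by
    simp only [hPhi, pmap, cir_two_pi, cir_zero, wk_two_pi, wk_zero]
  rw [hper, sub_self] at hint
  rw [intervalIntegral.integral_add (hcont1.intervalIntegrable _ _)
    (hcont2.intervalIntegrable _ _)] at hint
  have hg : (∫ θ in (0:ℝ)..(2 * π), (u (pmap x₀ ρ θ) : ℂ) * wk θ) = gfun u x₀ ρ := rfl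
  rw [hg] at hint
  exact eq_neg_of_add_eq_zero_left hint

lemma ode (ρ : ℝ) :
    (ρ:ℂ)^2 * f1 u x₀ ρ = (ρ:ℂ)^2 * g2 u x₀ ρ + (ρ:ℂ) * g1 u x₀ ρ - gfun u x₀ ρ := by
  have key : ∀ θ : ℝ, (ρ:ℂ)^2 * ((euclideanLap u (pmap x₀ ρ θ) : ℝ) : ℂ) * wk θ
      = (ρ:ℂ)^2 * ((((fderiv ℝ (fderiv ℝ u) (pmap x₀ ρ θ) (cir θ)) (cir θ) : ℝ) : ℂ) * wk θ)
        + (ρ:ℂ) * (((fderiv ℝ u (pmap x₀ ρ θ) (cir θ) : ℝ) : ℂ) * wk θ)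
        + ((fderiv ℝ (fderiv ℝ u) (pmap x₀ ρ θ) ((ρ:ℂ) * (cir θ * Complex.I))
              ((ρ:ℂ) * (cir θ * Complex.I))
            + fderiv ℝ u (pmap x₀ ρ θ) (-((ρ:ℂ) * cir θ)) : ℝ) : ℂ) * wk θ := by
    intro θ
    set z := pmap x₀ ρ θ with hz
    have e1 : (fderiv ℝ (fderiv ℝ u) z ((ρ:ℂ) * (cir θ * Complex.I)))
        ((ρ:ℂ) * (cir θ * Complex.I))
        = ρ^2 * ((fderiv ℝ (fderiv ℝ u) z (cir θ * Complex.I)) (cir θ * Complex.I)) := by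
      rw [← Complex.real_smul]
      simp only [map_smul, ContinuousLinearMap.smul_apply, smul_eq_mul]
      ring
    have e2 : fderiv ℝ u z (-((ρ:ℂ) * cir θ)) = -(ρ * fderiv ℝ u z (cir θ)) := by
      rw [← Complex.real_smul]
      simp only [map_neg, map_smul, smul_eq_mul]
    have e3 : euclideanLap u z
        = (fderiv ℝ (fderiv ℝ u) z (cir θ)) (cir θ)
          + (fderiv ℝ (fderiv ℝ u) z (cir θ * Complex.I)) (cir θ * Complex.I) := by
      rw [lap_eq u hu z, ← rot_identity (fderiv ℝ (fderiv ℝ u) z) θ]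
    rw [e1, e2, e3]
    push_cast
    ring
  have c_p : Continuous fun θ : ℝ => pmap x₀ ρ θ := by
    unfold pmap
    exact continuous_const.add (continuous_const.mul continuous_cir)
  have cA : Continuous fun θ : ℝ =>
      ((fderiv ℝ (fderiv ℝ u) (pmap x₀ ρ θ) (cir θ)) (cir θ) : ℂ) * wk θ :=
    (Complex.continuous_ofReal.comp
      ((((continuous_D2 u hu).comp c_p).clm_apply continuous_cir).clm_apply
        continuous_cir)).mul continuous_wk
  have cB : Continuous fun θ : ℝ => (fderiv ℝ u (pmap x₀ ρ θ) (cir θ) : ℂ) * wk θ :=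
    (Complex.continuous_ofReal.comp
      (((continuous_Du u hu).comp c_p).clm_apply continuous_cir)).mul continuous_wk
  have cE : Continuous fun θ : ℝ =>
      ((fderiv ℝ (fderiv ℝ u) (pmap x₀ ρ θ) ((ρ:ℂ) * (cir θ * Complex.I))
          ((ρ:ℂ) * (cir θ * Complex.I))
        + fderiv ℝ u (pmap x₀ ρ θ) (-((ρ:ℂ) * cir θ)) : ℝ) : ℂ) * wk θ := by
    have c_v : Continuous fun θ : ℝ => (ρ:ℂ) * (cir θ * Complex.I) :=
      continuous_const.mul (continuous_cir.mul continuous_const)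
    refine (Complex.continuous_ofReal.comp (Continuous.add ?_ ?_)).mul continuous_wk
    · exact (((continuous_D2 u hu).comp c_p).clm_apply c_v).clm_apply c_v
    · exact ((continuous_Du u hu).comp c_p).clm_apply
        (continuous_const.mul continuous_cir).neg
  calc (ρ:ℂ)^2 * f1 u x₀ ρ
      = ∫ θ in (0:ℝ)..(2*π), (ρ:ℂ)^2 * ((euclideanLap u (pmap x₀ ρ θ) : ℝ) : ℂ) * wk θ := by
        rw [f1, ← intervalIntegral.integral_const_mul]
        congr 1
        funext θ
        ring
    _ = ∫ θ in (0:ℝ)..(2*π),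
        ((ρ:ℂ)^2 * ((((fderiv ℝ (fderiv ℝ u) (pmap x₀ ρ θ) (cir θ)) (cir θ) : ℝ) : ℂ) * wk θ)
          + (ρ:ℂ) * (((fderiv ℝ u (pmap x₀ ρ θ) (cir θ) : ℝ) : ℂ) * wk θ)
          + ((fderiv ℝ (fderiv ℝ u) (pmap x₀ ρ θ) ((ρ:ℂ) * (cir θ * Complex.I))
                ((ρ:ℂ) * (cir θ * Complex.I))
              + fderiv ℝ u (pmap x₀ ρ θ) (-((ρ:ℂ) * cir θ)) : ℝ) : ℂ) * wk θ) :=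
        intervalIntegral.integral_congr (fun θ _ => key θ)
    _ = (ρ:ℂ)^2 * g2 u x₀ ρ + (ρ:ℂ) * g1 u x₀ ρ - gfun u x₀ ρ := by
        rw [intervalIntegral.integral_add
            (((continuous_const.fun_mul cA).fun_add (continuous_const.fun_mul cB)).intervalIntegrable _ _)
            (cE.intervalIntegrable _ _),
          intervalIntegral.integral_add
            ((continuous_const.fun_mul cA).intervalIntegrable _ _)
            ((continuous_const.fun_mul cB).intervalIntegrable _ _)]
        rw [ibp u x₀ hu ρ]
        rw [g2, g1, intervalIntegral.integral_const_mul, intervalIntegral.integral_const_mul]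
        ring

lemma continuous_f1 : Continuous (f1 u x₀) := by
  apply intervalIntegral.continuous_parametric_intervalIntegral_of_continuous'
  exact continuous_Gf u x₀ hu

lemma f1_norm_le {R B : ℝ} (hB : ∀ z ∈ closedBall x₀ R, |euclideanLap u z| ≤ B)
    {ρ : ℝ} (h0 : 0 ≤ ρ) (hρ : ρ ≤ R) : ‖f1 u x₀ ρ‖ ≤ B * (2 * π) := by
  have h := intervalIntegral.norm_integral_le_of_norm_le_const (C := B)
    (f := fun θ => (euclideanLap u (pmap x₀ ρ θ) : ℂ) * wk θ) (a := 0) (b := 2 * π) ?_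
  · calc ‖f1 u x₀ ρ‖ ≤ B * |2 * π - 0| := h
      _ = B * (2 * π) := by rw [sub_zero, abs_of_nonneg (by positivity)]
  · intro θ _
    rw [norm_mul, norm_wk, mul_one, Complex.norm_real, Real.norm_eq_abs]
    exact hB _ (pmap_mem_closedBall x₀ h0 hρ θ)

lemma hasDerivAt_mfun (ρ : ℝ) :
    HasDerivAt (fun ρ : ℝ => (ρ:ℂ)^2 * g1 u x₀ ρ - (ρ:ℂ) * gfun u x₀ ρ)
      ((ρ:ℂ)^2 * f1 u x₀ ρ) ρ := by
  have h1 : HasDerivAt (fun ρ : ℝ => ((ρ:ℂ))) 1 ρ := by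
    have h := (hasDerivAt_id ρ).ofReal_comp
    rw [Complex.ofReal_one] at h
    exact h
  have h2 : HasDerivAt (fun ρ : ℝ => ((ρ:ℂ) * (ρ:ℂ))) (1 * (ρ:ℂ) + (ρ:ℂ) * 1) ρ :=
    h1.mul h1
  have heq : (fun ρ : ℝ => (ρ:ℂ)^2 * g1 u x₀ ρ - (ρ:ℂ) * gfun u x₀ ρ)
      = fun ρ : ℝ => ((ρ:ℂ) * (ρ:ℂ)) * g1 u x₀ ρ - (ρ:ℂ) * gfun u x₀ ρ := by
    funext ρ; ring
  rw [heq]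
  have hd := ((h2.mul (hasDerivAt_g1 u x₀ hu ρ)).sub
    (h1.mul (hasDerivAt_gfun u x₀ hu ρ)))
  refine hd.congr_deriv ?_
  rw [ode u x₀ hu ρ]
  ring

lemma mfun_norm_le {R B : ℝ} (hB : ∀ z ∈ closedBall x₀ R, |euclideanLap u z| ≤ B)
    {ρ : ℝ} (h0 : 0 ≤ ρ) (hρ : ρ ≤ R) :
    ‖(ρ:ℂ)^2 * g1 u x₀ ρ - (ρ:ℂ) * gfun u x₀ ρ‖ ≤ 2 * π * B / 3 * ρ^3 := by
  have hftc := intervalIntegral.integral_eq_sub_of_hasDerivAt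
    (f := fun ρ : ℝ => (ρ:ℂ)^2 * g1 u x₀ ρ - (ρ:ℂ) * gfun u x₀ ρ)
    (a := 0) (b := ρ) (fun t _ => hasDerivAt_mfun u x₀ hu t)
    (((Complex.continuous_ofReal.pow 2).mul (continuous_f1 u x₀ hu)).intervalIntegrable 0 ρ)
  have hval : (ρ:ℂ)^2 * g1 u x₀ ρ - (ρ:ℂ) * gfun u x₀ ρ
      = ∫ t in (0:ℝ)..ρ, (t:ℂ)^2 * f1 u x₀ t := by
    rw [hftc]; simp
  rw [hval]
  have hbd : ∀ t ∈ Set.uIoc (0:ℝ) ρ, ‖(t:ℂ)^2 * f1 u x₀ t‖ ≤ (2 * π * B) * t^2 := by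
    intro t ht
    rw [Set.uIoc_of_le h0] at ht
    rw [norm_mul]
    have : ‖((t:ℂ))^2‖ = t^2 := by
      rw [← Complex.ofReal_pow, Complex.norm_real, Real.norm_eq_abs, abs_of_nonneg (by positivity)]
    rw [this]
    have := f1_norm_le u x₀ hu hB (le_of_lt ht.1) (le_trans ht.2 hρ)
    calc t^2 * ‖f1 u x₀ t‖ ≤ t^2 * (B * (2*π)) := by
          exact mul_le_mul_of_nonneg_left this (by positivity)
      _ = (2 * π * B) * t^2 := by ring
  have hB0 : 0 ≤ B :=
    le_trans (abs_nonneg _) (hB x₀ (mem_closedBall_self (le_trans h0 hρ)))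
  have hle := intervalIntegral.norm_integral_le_of_norm_le
    (f := fun t => (t:ℂ)^2 * f1 u x₀ t) (μ := MeasureTheory.volume) (a := 0) (b := ρ)
    (g := fun t => (2 * π * B) * t^2)
    h0 (Filter.Eventually.of_forall (fun t ht => hbd t (by rwa [Set.uIoc_of_le h0])))
    ((continuous_const.mul (continuous_pow 2)).intervalIntegrable 0 ρ)
  have hval2 : (∫ t in (0:ℝ)..ρ, (2 * π * B) * t^2) = 2 * π * B / 3 * ρ^3 := by
    rw [intervalIntegral.integral_const_mul, integral_pow]
    ring
  rw [hval2] at hle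
  exact hle

lemma g1_zero_norm_le (R A B : ℝ) (hR : 0 < R)
    (hA : ∀ z ∈ closedBall x₀ R, |u z| ≤ A)
    (hB : ∀ z ∈ closedBall x₀ R, |euclideanLap u z| ≤ B) :
    ‖g1 u x₀ 0‖ ≤ 2 * π * A / R + 2 * π * B / 3 * R := by
  have hB0 : 0 ≤ B := le_trans (abs_nonneg _) (hB x₀ (mem_closedBall_self hR.le))
  set h : ℝ → ℂ := fun ρ => ((ρ:ℝ):ℂ)⁻¹ * gfun u x₀ ρ with hh
  -- derivative bound on [ε, R]
  have key : ∀ ε, 0 < ε → ε ≤ R → ‖h R - h ε‖ ≤ 2 * π * B / 3 * R := by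
    intro ε hε hεR
    have hder : ∀ ρ ∈ Set.Icc ε R, HasDerivWithinAt h
        (-((((ρ:ℝ):ℂ))^2)⁻¹ * gfun u x₀ ρ + ((ρ:ℝ):ℂ)⁻¹ * g1 u x₀ ρ) (Set.Icc ε R) ρ := by
      intro ρ hρ
      have hρ0 : (ρ:ℝ) ≠ 0 := ne_of_gt (lt_of_lt_of_le hε hρ.1)
      have hρ0' : ((ρ:ℝ):ℂ) ≠ 0 := by exact_mod_cast hρ0
      have h1 : HasDerivAt (fun ρ : ℝ => ((ρ:ℂ))) 1 ρ := by
        have h := (hasDerivAt_id ρ).ofReal_comp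
        rw [Complex.ofReal_one] at h
        exact h
      have hinv : HasDerivAt (fun ρ : ℝ => ((ρ:ℂ))⁻¹) (-((((ρ:ℝ):ℂ))^2)⁻¹) ρ :=
        (hasDerivAt_inv hρ0').comp_ofReal
      exact (hinv.mul (hasDerivAt_gfun u x₀ hu ρ)).hasDerivWithinAt
    have hbd : ∀ ρ ∈ Set.Icc ε R,
        ‖-((((ρ:ℝ):ℂ))^2)⁻¹ * gfun u x₀ ρ + ((ρ:ℝ):ℂ)⁻¹ * g1 u x₀ ρ‖ ≤ 2 * π * B / 3 := by
      intro ρ hρ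
      have hρ0 : (0:ℝ) < ρ := lt_of_lt_of_le hε hρ.1
      have hρ0' : ((ρ:ℝ):ℂ) ≠ 0 := by exact_mod_cast ne_of_gt hρ0
      have heq : -((((ρ:ℝ):ℂ))^2)⁻¹ * gfun u x₀ ρ + ((ρ:ℝ):ℂ)⁻¹ * g1 u x₀ ρ
          = (((ρ:ℝ):ℂ)^3)⁻¹ * ((ρ:ℂ)^2 * g1 u x₀ ρ - (ρ:ℂ) * gfun u x₀ ρ) := by
        field_simp
        ring
      rw [heq, norm_mul]
      have h3 : ‖(((ρ:ℝ):ℂ)^3)⁻¹‖ = (ρ^3)⁻¹ := by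
        rw [norm_inv, ← Complex.ofReal_pow, Complex.norm_real, Real.norm_eq_abs,
          abs_of_nonneg (by positivity)]
      rw [h3]
      have hm := mfun_norm_le u x₀ hu hB hρ0.le hρ.2
      calc (ρ^3)⁻¹ * ‖(ρ:ℂ)^2 * g1 u x₀ ρ - (ρ:ℂ) * gfun u x₀ ρ‖
          ≤ (ρ^3)⁻¹ * (2 * π * B / 3 * ρ^3) := by
            exact mul_le_mul_of_nonneg_left hm (by positivity)
        _ = 2 * π * B / 3 := by field_simp
    have := Convex.norm_image_sub_le_of_norm_hasDerivWithin_le hder hbd (convex_Icc ε R)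
      ⟨le_refl ε, hεR⟩ ⟨hεR, le_refl R⟩
    calc ‖h R - h ε‖ ≤ 2 * π * B / 3 * ‖R - ε‖ := this
      _ ≤ 2 * π * B / 3 * R := by
          apply mul_le_mul_of_nonneg_left _ (by positivity)
          rw [Real.norm_eq_abs, abs_of_nonneg (by linarith)]
          linarith
  -- limit of h at 0+
  have hgfun0 : gfun u x₀ 0 = 0 := by
    have : ∀ θ : ℝ, (u (pmap x₀ 0 θ) : ℂ) * wk θ = (u x₀ : ℂ) * wk θ := by
      intro θ; simp [pmap]
    have hwkint : (∫ θ in (0:ℝ)..(2*π), wk θ) = 0 := by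
      have hftc := intervalIntegral.integral_eq_sub_of_hasDerivAt
        (f := fun θ => Complex.I * wk θ) (a := 0) (b := 2*π)
        (fun θ _ => ?_) (continuous_wk.intervalIntegrable 0 (2*π))
      · simp only [wk_two_pi, wk_zero, mul_one, sub_self] at hftc
        exact hftc
      · have := (hasDerivAt_wk θ).const_mul Complex.I
        refine this.congr_deriv ?_
        rw [mul_comm (wk θ) (-Complex.I), ← mul_assoc]
        simp [Complex.I_mul_I]
    rw [gfun, intervalIntegral.integral_congr (fun θ _ => this θ),
      intervalIntegral.integral_const_mul, hwkint, mul_zero]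
  have hlim : Filter.Tendsto h (nhdsWithin 0 (Set.Ioi 0)) (nhds (g1 u x₀ 0)) := by
    have hd := hasDerivAt_gfun u x₀ hu 0
    rw [hasDerivAt_iff_tendsto_slope] at hd
    have heq : ∀ ρ : ℝ, ρ ≠ 0 → slope (gfun u x₀) 0 ρ = h ρ := by
      intro ρ hρ
      simp only [slope, vsub_eq_sub, hgfun0, sub_zero]
      rw [Complex.real_smul, Complex.ofReal_inv]
    have hmono : nhdsWithin (0:ℝ) (Set.Ioi 0) ≤ nhdsWithin (0:ℝ) {(0:ℝ)}ᶜ :=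
      nhdsWithin_mono 0 (fun x hx => ne_of_gt hx)
    refine Filter.Tendsto.congr' ?_ (hd.mono_left hmono)
    filter_upwards [self_mem_nhdsWithin] with ρ hρ
    exact heq ρ (ne_of_gt hρ)
  have hfinal : ‖h R - g1 u x₀ 0‖ ≤ 2 * π * B / 3 * R := by
    have htnd : Filter.Tendsto (fun ε => ‖h R - h ε‖) (nhdsWithin 0 (Set.Ioi 0))
        (nhds ‖h R - g1 u x₀ 0‖) := (Filter.Tendsto.sub tendsto_const_nhds hlim).norm
    refine le_of_tendsto htnd ?_
    filter_upwards [Ioc_mem_nhdsGT_of_mem (Set.mem_Ico.mpr ⟨le_refl 0, hR⟩)] with ε hε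
    exact key ε hε.1 hε.2
  have hhR : ‖h R‖ ≤ 2 * π * A / R := by
    have hA0 : 0 ≤ A := le_trans (abs_nonneg _) (hA x₀ (mem_closedBall_self hR.le))
    have hgR : ‖gfun u x₀ R‖ ≤ A * (2 * π) := by
      have h := intervalIntegral.norm_integral_le_of_norm_le_const (C := A)
        (f := fun θ => (u (pmap x₀ R θ) : ℂ) * wk θ) (a := 0) (b := 2 * π) ?_
      · calc ‖gfun u x₀ R‖ ≤ A * |2 * π - 0| := h
          _ = A * (2 * π) := by rw [sub_zero, abs_of_nonneg (by positivity)]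
      · intro θ _
        rw [norm_mul, norm_wk, mul_one, Complex.norm_real, Real.norm_eq_abs]
        exact hA _ (pmap_mem_closedBall x₀ hR.le (le_refl R) θ)
    have : ‖h R‖ = R⁻¹ * ‖gfun u x₀ R‖ := by
      rw [hh]
      rw [norm_mul, norm_inv, Complex.norm_real, Real.norm_eq_abs, abs_of_nonneg hR.le]
    rw [this]
    calc R⁻¹ * ‖gfun u x₀ R‖ ≤ R⁻¹ * (A * (2 * π)) := by
          exact mul_le_mul_of_nonneg_left hgR (by positivity)
      _ = 2 * π * A / R := by field_simp
  calc ‖g1 u x₀ 0‖ = ‖h R - (h R - g1 u x₀ 0)‖ := by ring_nf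
    _ ≤ ‖h R‖ + ‖h R - g1 u x₀ 0‖ := norm_sub_le _ _
    _ ≤ 2 * π * A / R + 2 * π * B / 3 * R := add_le_add hhR hfinal

lemma g1_zero_eq : g1 u x₀ 0
    = ((fderiv ℝ u x₀ 1 * π : ℝ) : ℂ) - ((fderiv ℝ u x₀ Complex.I * π : ℝ) : ℂ) * Complex.I := by
  set a := fderiv ℝ u x₀ 1 with ha
  set b := fderiv ℝ u x₀ Complex.I with hb
  have hpt : ∀ θ : ℝ, (fderiv ℝ u (pmap x₀ 0 θ) (cir θ) : ℂ) * wk θ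
      = ((Real.cos θ^2 * a + Real.sin θ * Real.cos θ * b : ℝ) : ℂ)
        - ((Real.sin θ * Real.cos θ * a + Real.sin θ^2 * b : ℝ) : ℂ) * Complex.I := by
    intro θ
    have hp0 : pmap x₀ 0 θ = x₀ := by simp [pmap]
    have hLc : fderiv ℝ u (pmap x₀ 0 θ) (cir θ) = Real.cos θ * a + Real.sin θ * b := by
      rw [hp0, cir_eq]
      simp only [map_add, map_smul, smul_eq_mul]
      rw [ha, hb]
    rw [hLc, wk_eq]
    push_cast
    ring
  rw [g1, intervalIntegral.integral_congr (fun θ _ => hpt θ)]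
  have cP : Continuous fun θ : ℝ =>
      ((Real.cos θ^2 * a + Real.sin θ * Real.cos θ * b : ℝ) : ℂ) := by continuity
  have cQ : Continuous fun θ : ℝ =>
      ((Real.sin θ * Real.cos θ * a + Real.sin θ^2 * b : ℝ) : ℂ) * Complex.I := by continuity
  rw [intervalIntegral.integral_sub (cP.intervalIntegrable _ _) (cQ.intervalIntegrable _ _),
    intervalIntegral.integral_mul_const, intervalIntegral.integral_ofReal,
    intervalIntegral.integral_ofReal]
  have hP : (∫ θ in (0:ℝ)..(2*π), (Real.cos θ^2 * a + Real.sin θ * Real.cos θ * b)) = a * π := by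
    rw [intervalIntegral.integral_add
      (((Real.continuous_cos.fun_pow 2).fun_mul continuous_const).intervalIntegrable _ _)
      (((Real.continuous_sin.fun_mul Real.continuous_cos).fun_mul continuous_const).intervalIntegrable _ _),
      intervalIntegral.integral_mul_const, intervalIntegral.integral_mul_const,
      integral_cos_sq, integral_sin_mul_cos₁]
    simp [Real.sin_two_pi, Real.cos_two_pi]
    ring
  have hQ : (∫ θ in (0:ℝ)..(2*π), (Real.sin θ * Real.cos θ * a + Real.sin θ^2 * b)) = b * π := by
    rw [intervalIntegral.integral_add
      (((Real.continuous_sin.fun_mul Real.continuous_cos).fun_mul continuous_const).intervalIntegrable _ _)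
      (((Real.continuous_sin.fun_pow 2).fun_mul continuous_const).intervalIntegrable _ _),
      intervalIntegral.integral_mul_const, intervalIntegral.integral_mul_const,
      integral_sin_sq, integral_sin_mul_cos₁]
    simp [Real.sin_two_pi, Real.cos_two_pi]
    ring
  rw [hP, hQ]

lemma norm_fderiv_le_sqrt : ‖fderiv ℝ u x₀‖
    ≤ Real.sqrt ((fderiv ℝ u x₀ 1)^2 + (fderiv ℝ u x₀ Complex.I)^2) := by
  set a := fderiv ℝ u x₀ 1 with ha
  set b := fderiv ℝ u x₀ Complex.I with hb
  refine ContinuousLinearMap.opNorm_le_bound _ (Real.sqrt_nonneg _) fun z => ?_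
  have hz : fderiv ℝ u x₀ z = z.re * a + z.im * b := by
    have hrep : z = z.re • (1:ℂ) + z.im • Complex.I := by
      rw [Complex.real_smul, Complex.real_smul, mul_one, Complex.re_add_im]
    nth_rewrite 1 [hrep]
    rw [map_add, map_smul, map_smul, smul_eq_mul, smul_eq_mul]
  rw [hz]
  have hnz : ‖z‖ = Real.sqrt (z.re^2 + z.im^2) := by
    rw [Complex.norm_def, Complex.normSq_apply]
    ring_nf
  rw [hnz, Real.norm_eq_abs]
  have h1 : |z.re * a + z.im * b| = Real.sqrt ((z.re * a + z.im * b)^2) :=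
    (Real.sqrt_sq_eq_abs _).symm
  rw [h1, ← Real.sqrt_mul (by positivity)]
  apply Real.sqrt_le_sqrt
  nlinarith [sq_nonneg (a * z.im - b * z.re)]

lemma interior_estimate (R A B : ℝ) (hR : 0 < R)
    (hA : ∀ z ∈ closedBall x₀ R, |u z| ≤ A)
    (hB : ∀ z ∈ closedBall x₀ R, |euclideanLap u z| ≤ B) :
    ‖fderiv ℝ u x₀‖ ≤ 2 * A / R + 2 * B / 3 * R := by
  set a := fderiv ℝ u x₀ 1 with ha
  set b := fderiv ℝ u x₀ Complex.I with hb
  have h1 := g1_zero_norm_le u x₀ hu R A B hR hA hB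
  have h2 : ‖g1 u x₀ 0‖ = π * Real.sqrt (a^2 + b^2) := by
    rw [g1_zero_eq u x₀ hu, ← ha, ← hb]
    have : ((a * π : ℝ) : ℂ) - ((b * π : ℝ) : ℂ) * Complex.I
        = Complex.mk (a * π) (-(b * π)) := by
      apply Complex.ext <;> simp
    rw [this]
    rw [Complex.norm_def, Complex.normSq_mk]
    rw [show (a*π) * (a*π) + (-(b*π)) * (-(b*π)) = π^2 * (a^2 + b^2) by ring,
      Real.sqrt_mul (by positivity), Real.sqrt_sq Real.pi_pos.le]
  have h3 := norm_fderiv_le_sqrt u x₀ hu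
  rw [← ha, ← hb] at h3
  have h4 : Real.sqrt (a^2 + b^2) ≤ (2 * π * A / R + 2 * π * B / 3 * R) / π := by
    rw [le_div_iff₀ Real.pi_pos]
    calc Real.sqrt (a^2+b^2) * π = π * Real.sqrt (a^2+b^2) := by ring
      _ = ‖g1 u x₀ 0‖ := h2.symm
      _ ≤ 2 * π * A / R + 2 * π * B / 3 * R := h1
  calc ‖fderiv ℝ u x₀‖ ≤ Real.sqrt (a^2 + b^2) := h3
    _ ≤ (2 * π * A / R + 2 * π * B / 3 * R) / π := h4
    _ = 2 * A / R + 2 * B / 3 * R := by field_simp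

end
lemma sinh_le_mul {c y : ℝ} (h : |y| ≤ c) : |Real.sinh y| ≤ Real.cosh c * |y| := by
  have hc0 : 0 ≤ c := le_trans (abs_nonneg _) h
  have hder : ∀ x ∈ Set.Icc (-c) c, HasDerivWithinAt Real.sinh (Real.cosh x) (Set.Icc (-c) c) x :=
    fun x _ => (Real.hasDerivAt_sinh x).hasDerivWithinAt
  have hbd : ∀ x ∈ Set.Icc (-c) c, ‖Real.cosh x‖ ≤ Real.cosh c := by
    intro x hx
    rw [Real.norm_eq_abs, abs_of_pos (Real.cosh_pos _)]
    rw [Real.cosh_le_cosh, abs_of_nonneg hc0]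
    exact abs_le.mpr hx
  have h0mem : (0:ℝ) ∈ Set.Icc (-c) c := ⟨neg_nonpos.mpr hc0, hc0⟩
  have hymem : y ∈ Set.Icc (-c) c := abs_le.mp h
  have := Convex.norm_image_sub_le_of_norm_hasDerivWithin_le hder hbd (convex_Icc _ _)
    h0mem hymem
  simpa [Real.sinh_zero, Real.norm_eq_abs] using this

end GradDecay

open GradDecay Real

/-- Let `ω` be a `C²` function on a domain `Ω ⊂ ℝ² ≅ ℂ` satisfying `Δω = 2 sinh(2ω)`
on `Ω`, and suppose `|ω(w)| ≤ K₀ / cosh (d(w))` whenever `d(w) > 1`, where `d(w)` is the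
Euclidean distance from `w` to `∂Ω`.  Then there is a constant `δ > 0` such that
`|∇ω(w₀)| < δ e^{-d(w₀)}` for every `w₀ ∈ Ω` with `d(w₀) > 2`. -/
theorem gradient_decay_of_sinh_gordon
    (Ω : Set ℂ) (hΩ : IsOpen Ω) (ω : ℂ → ℝ) (K₀ : ℝ) (hK₀ : 0 < K₀)
    (hC2 : ContDiff ℝ 2 ω)
    (hpde : ∀ w ∈ Ω, euclideanLap ω w = 2 * Real.sinh (2 * ω w))
    (hbound : ∀ w ∈ Ω, 1 < infDist w Ωᶜ → |ω w| ≤ K₀ / Real.cosh (infDist w Ωᶜ)) :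
    ∃ δ : ℝ, 0 < δ ∧ ∀ w₀ ∈ Ω, 2 < infDist w₀ Ωᶜ →
      ‖fderiv ℝ ω w₀‖ < δ * Real.exp (-infDist w₀ Ωᶜ) := by
  set C : ℝ := 2 + 8 * Real.cosh (2 * K₀) / 3 with hC
  have hCpos : 0 < C := by positivity
  refine ⟨2 * Real.exp 1 * K₀ * C + 1, by positivity, ?_⟩
  intro w₀ hw₀ hd2
  set d₀ := infDist w₀ Ωᶜ with hd₀
  set A := K₀ / Real.cosh (d₀ - 1) with hA_def
  have hcosh1 : (1:ℝ) ≤ Real.cosh (d₀ - 1) := Real.one_le_cosh _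
  have hzΩ : ∀ z ∈ closedBall w₀ 1, z ∈ Ω ∧ 1 < infDist z Ωᶜ ∧ d₀ - 1 ≤ infDist z Ωᶜ := by
    intro z hz
    have hlip : d₀ ≤ infDist z Ωᶜ + dist w₀ z := infDist_le_infDist_add_dist
    have hdist : dist w₀ z ≤ 1 := by
      rw [dist_comm]
      exact mem_closedBall.mp hz
    have h1 : d₀ - 1 ≤ infDist z Ωᶜ := by linarith
    have h2 : 1 < infDist z Ωᶜ := by linarith
    have hzin : z ∈ Ω := by
      by_contra hzn
      have : infDist z Ωᶜ = 0 := infDist_zero_of_mem hzn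
      linarith
    exact ⟨hzin, h2, h1⟩
  have hA : ∀ z ∈ closedBall w₀ 1, |ω z| ≤ A := by
    intro z hz
    obtain ⟨hzin, h1, hge⟩ := hzΩ z hz
    refine le_trans (hbound z hzin h1) ?_
    rw [hA_def]
    apply div_le_div_of_nonneg_left hK₀.le (lt_of_lt_of_le one_pos hcosh1)
    rw [Real.cosh_le_cosh, abs_of_nonneg (by linarith), abs_of_nonneg (by linarith)]
    exact hge
  have hAK : A ≤ K₀ := by
    rw [hA_def]
    exact div_le_self hK₀.le hcosh1
  have hApos : 0 < A := div_pos hK₀ (lt_of_lt_of_le one_pos hcosh1)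
  have hB : ∀ z ∈ closedBall w₀ 1, |euclideanLap ω z| ≤ 4 * Real.cosh (2*K₀) * A := by
    intro z hz
    obtain ⟨hzin, h1, _⟩ := hzΩ z hz
    rw [hpde z hzin, abs_mul, abs_two]
    have hy : |2 * ω z| ≤ 2 * K₀ := by
      rw [abs_mul, abs_two]
      have := hA z hz
      linarith
    have hs := sinh_le_mul hy
    rw [abs_mul, abs_two] at hs
    have h2A : |ω z| ≤ A := hA z hz
    have hcpos : (0:ℝ) < Real.cosh (2*K₀) := Real.cosh_pos _
    nlinarith [abs_nonneg (ω z)]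
  have hest := interior_estimate ω w₀ hC2 1 A (4 * Real.cosh (2*K₀) * A) one_pos hA hB
  have hexp : A ≤ 2 * K₀ * Real.exp (1 - d₀) := by
    have hch : Real.exp (d₀ - 1) / 2 ≤ Real.cosh (d₀ - 1) := by
      rw [Real.cosh_eq]
      have : 0 < Real.exp (-(d₀-1)) := Real.exp_pos _
      linarith
    rw [hA_def]
    have hepos : 0 < Real.exp (d₀ - 1) / 2 := by positivity
    calc K₀ / Real.cosh (d₀-1) ≤ K₀ / (Real.exp (d₀-1)/2) :=
        div_le_div_of_nonneg_left hK₀.le hepos hch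
      _ = 2 * K₀ * Real.exp (1 - d₀) := by
          have he : Real.exp (1 - d₀) = (Real.exp (d₀ - 1))⁻¹ := by
            rw [← Real.exp_neg]
            ring_nf
          rw [he]
          field_simp
  calc ‖fderiv ℝ ω w₀‖ ≤ 2 * A / 1 + 2 * (4 * Real.cosh (2*K₀) * A) / 3 * 1 := hest
    _ = A * C := by rw [hC]; ring
    _ ≤ (2 * K₀ * Real.exp (1 - d₀)) * C := mul_le_mul_of_nonneg_right hexp hCpos.le
    _ = (2 * Real.exp 1 * K₀ * C) * Real.exp (-d₀) := by
        rw [show (1:ℝ) - d₀ = 1 + (-d₀) by ring, Real.exp_add]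
        ring
    _ < (2 * Real.exp 1 * K₀ * C + 1) * Real.exp (-d₀) := by
        have := Real.exp_pos (-d₀)
        have hpos : 0 < 2 * Real.exp 1 * K₀ * C := by positivity
        nlinarith
end

section
/- In the unit disk model of ℍ² with metric λ(z)²|dz|², λ(z) = 2/(1-|z|²), let c : [0,∞) → ℍ² be a unit-speed curve with c(t) → 0 and with the angle α(t) between c'(t) and the radial direction toward 0 tending to 0. Writing c(t) in polar coordinates with radius r(t) = |c(t)|, one has r'(t) → -1/2; consequently r(t) → -∞ along a divergent parameter, a contradiction, so no such curve exists. -/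
open Filter

/-- Nonoriented angle between two vectors of `ℂ ≅ ℝ²` (via the real inner product
`⟪x, y⟫ = Re (x * conj y)`). -/
noncomputable def angleBetween (x y : ℂ) : ℝ :=
  Real.arccos ((x * (starRingEnd ℂ) y).re / (‖x‖ * ‖y‖))

lemma abs_hasDerivAt' (c : ℝ → ℂ) (t : ℝ) (hc : HasDerivAt c (deriv c t) t)
    (h0 : c t ≠ 0) :
    HasDerivAt (fun s => ‖c s‖)
      ((((starRingEnd ℂ) (c t)) * deriv c t).re / ‖c t‖) t := by
  have hx : HasDerivAt (fun s => (c s).re) ((deriv c t).re) t :=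
    Complex.reCLM.hasFDerivAt.comp_hasDerivAt t hc
  have hy : HasDerivAt (fun s => (c s).im) ((deriv c t).im) t :=
    Complex.imCLM.hasFDerivAt.comp_hasDerivAt t hc
  have hnsq : HasDerivAt (fun s => (c s).re * (c s).re + (c s).im * (c s).im)
      (((deriv c t).re * (c t).re + (c t).re * (deriv c t).re) +
        ((deriv c t).im * (c t).im + (c t).im * (deriv c t).im)) t :=
    (hx.mul hx).add (hy.mul hy)
  have hne0 : (c t).re * (c t).re + (c t).im * (c t).im ≠ 0 := by
    have := (Complex.normSq_pos.mpr h0).ne'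
    simpa [Complex.normSq_apply] using this
  have habs : ∀ s, Real.sqrt ((c s).re * (c s).re + (c s).im * (c s).im)
      = ‖c s‖ := by
    intro s
    rw [Complex.norm_def, Complex.normSq_apply]
  have h := hnsq.sqrt hne0
  have hval : (((deriv c t).re * (c t).re + (c t).re * (deriv c t).re) +
        ((deriv c t).im * (c t).im + (c t).im * (deriv c t).im)) /
        (2 * Real.sqrt ((c t).re * (c t).re + (c t).im * (c t).im))
      = (((starRingEnd ℂ) (c t)) * deriv c t).re / ‖c t‖ := by
    rw [habs]
    have hpos : (0:ℝ) < ‖c t‖ := by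
      simpa using (norm_pos_iff.mpr h0)
    field_simp [Complex.mul_re]
    simp only [Complex.mul_re, Complex.conj_re, Complex.conj_im]
    ring
  rw [hval] at h
  simp only [habs] at h
  exact h

theorem no_unit_speed_curve_converging_radially_to_center'
    (c : ℝ → ℂ) (hC1 : ContDiff ℝ 1 c)
    (hmem : ∀ t : ℝ, 0 ≤ t → ‖c t‖ < 1)
    (hne : ∀ t : ℝ, 0 ≤ t → c t ≠ 0)
    (hunit : ∀ t : ℝ, 0 ≤ t →
      2 / (1 - ‖c t‖ ^ 2) * ‖deriv c t‖ = 1)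
    (hlim : Tendsto c atTop (nhds 0))
    (hangle : Tendsto (fun t => Real.arccos (((deriv c t) * (starRingEnd ℂ) (-(c t))).re /
        (‖deriv c t‖ * ‖-(c t)‖))) atTop (nhds 0)) :
    Tendsto (fun t => deriv (fun s => ‖c s‖) t) atTop (nhds (-(1 / 2)))
      ∧ False := by
  have hdiff : Differentiable ℝ c := hC1.differentiable one_ne_zero
  set r : ℝ → ℝ := fun s => ‖c s‖ with hr
  set D : ℝ → ℝ := fun t => (((starRingEnd ℂ) (c t)) * deriv c t).re / ‖c t‖
    with hD
  have hder : ∀ t : ℝ, 0 ≤ t → HasDerivAt r (D t) t :=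
    fun t ht => abs_hasDerivAt' c t (hdiff t).hasDerivAt (hne t ht)
  have habs0 : Tendsto r atTop (nhds 0) := by
    have := (continuous_norm.tendsto 0).comp hlim
    simpa [hr, Function.comp_def] using this
  -- speed
  have hrnn : ∀ t, 0 ≤ r t := fun t => norm_nonneg _
  have h1pos : ∀ t : ℝ, 0 ≤ t → (0:ℝ) < 1 - r t ^ 2 := by
    intro t ht
    have := hmem t ht
    nlinarith [hrnn t]
  have hspeed : ∀ t : ℝ, 0 ≤ t → ‖deriv c t‖ = (1 - r t ^ 2) / 2 := by
    intro t ht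
    have h1 := h1pos t ht
    have h2 := hunit t ht
    have h1' : 1 - ‖c t‖ ^ 2 ≠ 0 := h1.ne'
    simp only [hr]
    field_simp at h2 ⊢
    linarith
  have hspeedlim : Tendsto (fun t => ‖deriv c t‖) atTop (nhds (1/2)) := by
    have h2 : Tendsto (fun t => (1 - r t ^ 2) / 2) atTop (nhds ((1 - 0 ^ 2) / 2)) :=
      (tendsto_const_nhds.sub (habs0.pow 2)).div_const 2
    rw [show ((1:ℝ) - 0 ^ 2)/2 = 1/2 by norm_num] at h2
    refine h2.congr' ?_
    filter_upwards [eventually_ge_atTop (0:ℝ)] with t ht using (hspeed t ht).symm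
  have hspos : ∀ t : ℝ, 0 ≤ t → (0:ℝ) < ‖deriv c t‖ := by
    intro t ht
    rw [hspeed t ht]
    linarith [h1pos t ht]
  set q : ℝ → ℝ := fun t => ((deriv c t) * (starRingEnd ℂ) (-(c t))).re /
      (‖deriv c t‖ * ‖-(c t)‖) with hq
  have hqmem : ∀ t : ℝ, 0 ≤ t → -1 ≤ q t ∧ q t ≤ 1 := by
    intro t ht
    have hden : (0:ℝ) < ‖deriv c t‖ * ‖-(c t)‖ := by
      have : (0:ℝ) < ‖-(c t)‖ := by
        simpa using norm_pos_iff.mpr (neg_ne_zero.mpr (hne t ht))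
      exact mul_pos (hspos t ht) this
    have hnum : |((deriv c t) * (starRingEnd ℂ) (-(c t))).re| ≤
        ‖deriv c t‖ * ‖-(c t)‖ := by
      calc |((deriv c t) * (starRingEnd ℂ) (-(c t))).re|
          ≤ ‖(deriv c t) * (starRingEnd ℂ) (-(c t))‖ :=
            Complex.abs_re_le_norm _
        _ = ‖deriv c t‖ * ‖-(c t)‖ := by
            rw [norm_mul, Complex.norm_conj]
    have := abs_le.mp ((abs_div _ _).le.trans (by
      rw [abs_of_pos hden]
      exact div_le_one_of_le₀ hnum hden.le) : |q t| ≤ 1)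
    exact this
  have hqlim : Tendsto q atTop (nhds 1) := by
    have h2 : Tendsto (fun t => Real.cos (Real.arccos (q t))) atTop (nhds (Real.cos 0)) :=
      (Real.continuous_cos.tendsto 0).comp hangle
    rw [Real.cos_zero] at h2
    refine h2.congr' ?_
    filter_upwards [eventually_ge_atTop (0:ℝ)] with t ht
    exact Real.cos_arccos (hqmem t ht).1 (hqmem t ht).2
  have hDeq : ∀ t : ℝ, 0 ≤ t → D t = -(q t * ‖deriv c t‖) := by
    intro t ht
    have hcpos : (0:ℝ) < ‖c t‖ := norm_pos_iff.mpr (hne t ht)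
    have hs := hspos t ht
    have hnum : ((deriv c t) * (starRingEnd ℂ) (-(c t))).re =
        -(((starRingEnd ℂ) (c t)) * deriv c t).re := by
      simp [Complex.mul_re, Complex.conj_re, Complex.conj_im]
      ring
    simp only [hD, hq, hnum, map_neg, norm_neg]
    field_simp
    simp only [Complex.neg_re]
    ring
  have hDlim : Tendsto D atTop (nhds (-(1/2))) := by
    have h2 : Tendsto (fun t => -(q t * ‖deriv c t‖)) atTop
        (nhds (-(1 * (1/2)))) := (hqlim.mul hspeedlim).neg
    rw [show -((1:ℝ) * (1/2)) = -(1/2) by norm_num] at h2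
    refine h2.congr' ?_
    filter_upwards [eventually_ge_atTop (0:ℝ)] with t ht using (hDeq t ht).symm
  constructor
  · refine hDlim.congr' ?_
    filter_upwards [eventually_ge_atTop (0:ℝ)] with t ht
    exact ((hder t ht).deriv).symm
  · -- derive False
    have hev : ∀ᶠ t in atTop, D t < -(1/4) :=
      hDlim.eventually_lt_const (by norm_num)
    obtain ⟨T, hT⟩ := (hev.and (eventually_ge_atTop (0:ℝ))).exists_forall_of_atTop
    set b : ℝ := T + (4 * r T + 1) with hb
    have hab : T < b := by
      have := hrnn T
      simp only [hb]; linarith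
    have hcont : ContinuousOn r (Set.Icc T b) :=
      (continuous_norm.comp hC1.continuous).continuousOn
    obtain ⟨ξ, hξ, hslope⟩ := exists_hasDerivAt_eq_slope r D hab hcont
      (fun x hx => hder x (hT x hx.1.le).2)
    have hDξ : D ξ < -(1/4) := (hT ξ hξ.1.le).1
    rw [hslope] at hDξ
    have hbT : b - T = 4 * r T + 1 := by simp [hb]
    have hrb : 0 ≤ r b := hrnn b
    have hpos : (0:ℝ) < b - T := by linarith
    rw [div_lt_iff₀ hpos] at hDξ
    nlinarith

/-- In the unit disk model of `ℍ²` with metric `λ(z)²|dz|²`, `λ(z) = 2/(1-|z|²)`, let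
`c : [0,∞) → ℍ²` be a unit-speed `C¹` curve with `c(t) → 0` and with the angle `α(t)`
between `c'(t)` and the radial direction toward `0` tending to `0`.  Writing
`r(t) = |c(t)|`, one has `r'(t) → -1/2`; consequently `r(t) → -∞` along a divergent
parameter, a contradiction — no such curve exists. -/
theorem no_unit_speed_curve_converging_radially_to_center
    (c : ℝ → ℂ) (hC1 : ContDiff ℝ 1 c)
    (hmem : ∀ t : ℝ, 0 ≤ t → ‖c t‖ < 1)
    (hne : ∀ t : ℝ, 0 ≤ t → c t ≠ 0)
    (hunit : ∀ t : ℝ, 0 ≤ t →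
      2 / (1 - ‖c t‖ ^ 2) * ‖deriv c t‖ = 1)
    (hlim : Tendsto c atTop (nhds 0))
    (hangle : Tendsto (fun t => angleBetween (deriv c t) (-(c t))) atTop (nhds 0)) :
    Tendsto (fun t => deriv (fun s => ‖c s‖) t) atTop (nhds (-(1 / 2)))
      ∧ False := by
  exact no_unit_speed_curve_converging_radially_to_center' c hC1 hmem hne hunit hlim hangle
end
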